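/- Let (Ω,F,P) be a probability space and X : [0,∞) → Ω → ℝ a family of functions. Suppose there is a set N ∈ F with P(N) = 0 such that for every ω ∉ N the path t ↦ X_t(ω) is continuous and X_0(ω) = 0. Define τ(ω) := inf{t ≥ 0 : X_t(ω) ≥ 1} ∈ [0,∞] and assume ω ↦ τ(ω) is F-measurable with P(τ = 8) = 0 and P(τ ∈ (8,9)) > 0. Then: (a) for every n ≥ 2, the set {ω : X(ω),0 ⊨ₙ ψ} is empty, so its probability is 0 for all n ≥ 2; (b) the symmetric difference of {ω : X(ω),0 ⊨ ψ} and {ω : τ(ω) ∈ (8,9)} is contained in a P-null set; consequently the probabilities P({ω : X(ω),0 ⊨ₙ ψ}) = 0 do not converge, as n → ∞, to the probability P(τ ∈ (8,9)) > 0 of the continuous-semantics event {ω : X(ω),0 ⊨ ψ}. -/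

import Mathlib

open MeasureTheory Filter
open scoped NNReal ENNReal Topology symmDiff

/-- `◇_I φ` at time `t`: there is `s ∈ I` with `φ` at `t+s`. -/
def Dia (I : Set ℝ≥0) (φ : ℝ≥0 → Prop) (t : ℝ≥0) : Prop := ∃ s ∈ I, φ (t + s)

/-- `□_I φ` at time `t`: for all `s ∈ I`, `φ` at `t+s`. -/
def Box (I : Set ℝ≥0) (φ : ℝ≥0 → Prop) (t : ℝ≥0) : Prop := ∀ s ∈ I, φ (t + s)

/-- The atomic proposition `p`: `f(t) ≥ 1`. -/
def SatP (f : ℝ≥0 → ℝ) (t : ℝ≥0) : Prop := 1 ≤ f t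

/-- `φ₁ := □_{(1,2)}(◇_{(1,4)}p ∧ ¬◇_{(1,3)}p)`. -/
def Phi1 (f : ℝ≥0 → ℝ) : ℝ≥0 → Prop :=
  Box (Set.Ioo 1 2) fun u => Dia (Set.Ioo 1 4) (SatP f) u ∧ ¬ Dia (Set.Ioo 1 3) (SatP f) u

/-- `φ₂ := (◇_{(1,3)}φ₁) ∧ (¬◇_{(1,2)}φ₁) ∧ (¬◇_{(2,3)}φ₁)`. -/
def Phi2 (f : ℝ≥0 → ℝ) : ℝ≥0 → Prop := fun t =>
  Dia (Set.Ioo 1 3) (Phi1 f) t ∧ ¬ Dia (Set.Ioo 1 2) (Phi1 f) t ∧ ¬ Dia (Set.Ioo 2 3) (Phi1 f) t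

/-- `φ₃ := ◇_{(1,2)}φ₂`. -/
def Phi3 (f : ℝ≥0 → ℝ) : ℝ≥0 → Prop := Dia (Set.Ioo 1 2) (Phi2 f)

/-- `ψ := (¬p) ∧ (¬◇_{(0,8)}p) ∧ φ₃`, continuous semantics. -/
def Psi (f : ℝ≥0 → ℝ) : ℝ≥0 → Prop := fun t =>
  ¬ SatP f t ∧ ¬ Dia (Set.Ioo 0 8) (SatP f) t ∧ Phi3 f t

/-- The grid `ℕ/n = {k/n : k ∈ ℕ}` inside `[0,∞)`. -/
def grid (n : ℕ) : Set ℝ≥0 := {t | ∃ k : ℕ, t = (k : ℝ≥0) / (n : ℝ≥0)}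

/-- Discrete `◇_I φ`. -/
def DiaD (n : ℕ) (I : Set ℝ≥0) (φ : ℝ≥0 → Prop) (t : ℝ≥0) : Prop := ∃ s ∈ I ∩ grid n, φ (t + s)

/-- Discrete `□_I φ`. -/
def BoxD (n : ℕ) (I : Set ℝ≥0) (φ : ℝ≥0 → Prop) (t : ℝ≥0) : Prop := ∀ s ∈ I ∩ grid n, φ (t + s)

/-- Discrete semantics of `φ₁`. -/
def Phi1D (f : ℝ≥0 → ℝ) (n : ℕ) : ℝ≥0 → Prop :=
  BoxD n (Set.Ioo 1 2) fun u =>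
    DiaD n (Set.Ioo 1 4) (SatP f) u ∧ ¬ DiaD n (Set.Ioo 1 3) (SatP f) u

/-- Discrete semantics of `φ₂`. -/
def Phi2D (f : ℝ≥0 → ℝ) (n : ℕ) : ℝ≥0 → Prop := fun t =>
  DiaD n (Set.Ioo 1 3) (Phi1D f n) t ∧ ¬ DiaD n (Set.Ioo 1 2) (Phi1D f n) t ∧
    ¬ DiaD n (Set.Ioo 2 3) (Phi1D f n) t

/-- Discrete semantics of `φ₃`. -/
def Phi3D (f : ℝ≥0 → ℝ) (n : ℕ) : ℝ≥0 → Prop := DiaD n (Set.Ioo 1 2) (Phi2D f n)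

/-- Discrete semantics of `ψ`. -/
def PsiD (f : ℝ≥0 → ℝ) (n : ℕ) : ℝ≥0 → Prop := fun t =>
  ¬ SatP f t ∧ ¬ DiaD n (Set.Ioo 0 8) (SatP f) t ∧ Phi3D f n t

/-- `τ := inf{t ≥ 0 : f(t) ≥ 1} ∈ [0,∞]`, with the convention `inf ∅ = ∞`. -/
noncomputable def tauInf (f : ℝ≥0 → ℝ) : ℝ≥0∞ :=
  sInf {x : ℝ≥0∞ | ∃ t : ℝ≥0, x = (t : ℝ≥0∞) ∧ 1 ≤ f t}


/-! ### Auxiliary lemmas -/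

private def Phi1' (n : ℕ) (g : ℕ → Prop) (w : ℕ) : Prop :=
  ∀ b, n < b → b < 2*n →
    (∃ c, n < c ∧ c < 4*n ∧ g (w+b+c)) ∧ (∀ c, n < c → c < 3*n → ¬ g (w+b+c))

private lemma core (n : ℕ) (hn : 2 ≤ n) (g : ℕ → Prop) (a : ℕ) (ha1 : n < a) (ha2 : a < 2*n)
    (hZ : ∀ k, k < 8*n → ¬ g k)
    (hP1 : ∀ s, n < s → s < 3*n → s ≠ 2*n → ¬ Phi1' n g (a+s))
    (hP2 : Phi1' n g (a+2*n)) : False := by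
  set w := a + 2*n with hw
  have Z : ∀ m, m ≤ w + 5*n - 2 → ¬ g m := by
    intro m hm
    by_cases h8 : m < 8*n
    · exact hZ m h8
    · push_neg at h8
      have hb : n < m - (w + (3*n-1)) := by omega
      have hb2 : m - (w + (3*n-1)) < 2*n := by omega
      have h := (hP2 _ hb hb2).2 (3*n-1) (by omega) (by omega)
      have hme : w + (m - (w + (3*n-1))) + (3*n-1) = m := by omega
      rw [hme] at h; exact h
  have step1 : ¬ g (w + 5*n - 1) := by
    intro hg
    refine hP1 (2*n-1) (by omega) (by omega) (by omega) ?_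
    intro b hb1 hb2
    refine ⟨⟨5*n - b, by omega, by omega, ?_⟩, ?_⟩
    · have he : a + (2*n-1) + b + (5*n - b) = w + 5*n - 1 := by omega
      rw [he]; exact hg
    · intro c hc1 hc2
      exact Z _ (by omega)
  have hit : g (w + 5*n) := by
    obtain ⟨⟨c, hc1, hc4, hgc⟩, hno⟩ := hP2 (n+1) (by omega) (by omega)
    by_cases hc3 : c < 3*n
    · exact absurd hgc (hno c hc1 hc3)
    · push_neg at hc3
      rcases lt_trichotomy (w + (n+1) + c) (w+5*n-1) with h | h | h
      · exact absurd hgc (Z _ (by omega))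
      · rw [h] at hgc; exact absurd hgc step1
      · have he : w + (n+1) + c = w + 5*n := by omega
        rw [he] at hgc; exact hgc
  refine hP1 (2*n+1) (by omega) (by omega) (by omega) ?_
  intro b hb1 hb2
  refine ⟨⟨5*n - 1 - b, by omega, by omega, ?_⟩, ?_⟩
  · have he : a + (2*n+1) + b + (5*n-1-b) = w + 5*n := by omega
    rw [he]; exact hit
  · intro c hc1 hc2
    rcases lt_trichotomy (a+(2*n+1)+b+c) (w+5*n-1) with h | h | h
    · exact Z _ (by omega)
    · rw [h]; exact step1
    · exfalso; omega

private lemma add_grid (n m k : ℕ) : ((m:ℝ≥0))/n + (k:ℝ≥0)/n = (((m+k:ℕ)):ℝ≥0)/n := by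
  push_cast; rw [← add_div]

private lemma mem_Ioo_grid {n : ℕ} (hn : 0 < n) {P Q : ℝ≥0} {p q : ℕ}
    (hP : (p:ℝ≥0) = P) (hQ : (q:ℝ≥0) = Q) (s : ℝ≥0) :
    s ∈ Set.Ioo P Q ∩ grid n ↔ ∃ c : ℕ, p*n < c ∧ c < q*n ∧ s = (c:ℝ≥0)/n := by
  subst hP hQ
  have hn' : (0:ℝ≥0) < n := by exact_mod_cast hn
  constructor
  · rintro ⟨⟨h1, h2⟩, k, rfl⟩
    refine ⟨k, ?_, ?_, rfl⟩
    · have := (lt_div_iff₀ hn').mp h1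
      exact_mod_cast this
    · have := (div_lt_iff₀ hn').mp h2
      exact_mod_cast this
  · rintro ⟨c, h1, h2, rfl⟩
    refine ⟨⟨(lt_div_iff₀ hn').mpr ?_, (div_lt_iff₀ hn').mpr ?_⟩, c, rfl⟩
    · exact_mod_cast h1
    · exact_mod_cast h2

private lemma DiaD_nat {n : ℕ} (hn : 0 < n) {P Q : ℝ≥0} {p q : ℕ}
    (hP : (p:ℝ≥0) = P) (hQ : (q:ℝ≥0) = Q) (φ : ℝ≥0 → Prop) (m : ℕ) :
    DiaD n (Set.Ioo P Q) φ ((m:ℝ≥0)/n) ↔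
      ∃ c : ℕ, p*n < c ∧ c < q*n ∧ φ (((m+c : ℕ):ℝ≥0)/n) := by
  unfold DiaD
  constructor
  · rintro ⟨s, hs, hφ⟩
    obtain ⟨c, h1, h2, rfl⟩ := (mem_Ioo_grid hn hP hQ s).mp hs
    exact ⟨c, h1, h2, by rwa [add_grid] at hφ⟩
  · rintro ⟨c, h1, h2, hφ⟩
    exact ⟨(c:ℝ≥0)/n, (mem_Ioo_grid hn hP hQ _).mpr ⟨c, h1, h2, rfl⟩, by rwa [add_grid]⟩

private lemma BoxD_nat {n : ℕ} (hn : 0 < n) {P Q : ℝ≥0} {p q : ℕ}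
    (hP : (p:ℝ≥0) = P) (hQ : (q:ℝ≥0) = Q) (φ : ℝ≥0 → Prop) (m : ℕ) :
    BoxD n (Set.Ioo P Q) φ ((m:ℝ≥0)/n) ↔
      ∀ c : ℕ, p*n < c → c < q*n → φ (((m+c : ℕ):ℝ≥0)/n) := by
  unfold BoxD
  constructor
  · intro h c h1 h2
    have := h ((c:ℝ≥0)/n) ((mem_Ioo_grid hn hP hQ _).mpr ⟨c, h1, h2, rfl⟩)
    rwa [add_grid] at this
  · intro h s hs
    obtain ⟨c, h1, h2, rfl⟩ := (mem_Ioo_grid hn hP hQ s).mp hs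
    rw [add_grid]; exact h c h1 h2

private lemma Phi1D_nat {n : ℕ} (hn : 0 < n) (f : ℝ≥0 → ℝ) (m : ℕ) :
    Phi1D f n ((m:ℝ≥0)/n) ↔ Phi1' n (fun k => 1 ≤ f ((k:ℝ≥0)/n)) m := by
  unfold Phi1D Phi1'
  rw [BoxD_nat hn (p := 1) (q := 2) (by norm_num) (by norm_num)]
  constructor
  · intro h b hb1 hb2
    obtain ⟨hd, hnd⟩ := h b (by omega) hb2
    rw [DiaD_nat hn (p := 1) (q := 4) (by norm_num) (by norm_num)] at hd
    rw [DiaD_nat hn (p := 1) (q := 3) (by norm_num) (by norm_num)] at hnd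
    push_neg at hnd
    constructor
    · obtain ⟨c, h1, h2, h3⟩ := hd
      exact ⟨c, by omega, h2, by simpa [SatP, Nat.add_assoc] using h3⟩
    · intro c hc1 hc2 hg
      exact hnd c (by omega) hc2 (by simpa [SatP, Nat.add_assoc] using hg)
  · intro h c hc1 hc2
    obtain ⟨hd, hnd⟩ := h c (by omega) hc2
    constructor
    · rw [DiaD_nat hn (p := 1) (q := 4) (by norm_num) (by norm_num)]
      obtain ⟨d, h1, h2, h3⟩ := hd
      exact ⟨d, by omega, h2, by simpa [SatP, Nat.add_assoc] using h3⟩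
    · rw [DiaD_nat hn (p := 1) (q := 3) (by norm_num) (by norm_num)]
      rintro ⟨d, h1, h2, h3⟩
      exact hnd d (by omega) h2 (by simpa [SatP, Nat.add_assoc] using h3)

private lemma psiD_empty (f : ℝ≥0 → ℝ) (n : ℕ) (hn : 2 ≤ n) : ¬ PsiD f n 0 := by
  rintro ⟨h0, h08, hphi3⟩
  have hn0 : 0 < n := by omega
  set g : ℕ → Prop := fun k => 1 ≤ f ((k:ℝ≥0)/n) with hg
  have h0eq : (0:ℝ≥0) = ((0:ℕ):ℝ≥0)/n := by simp
  rw [h0eq] at h08 hphi3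
  unfold Phi3D at hphi3
  rw [DiaD_nat hn0 (p := 1) (q := 2) (by norm_num) (by norm_num)] at hphi3
  obtain ⟨a, ha1, ha2, hphi2⟩ := hphi3
  rw [Nat.zero_add] at hphi2
  have hZ : ∀ k, k < 8*n → ¬ g k := by
    intro k hk hgk
    rcases Nat.eq_zero_or_pos k with rfl | hkpos
    · exact h0 (by simpa [hg, SatP] using hgk)
    · rw [DiaD_nat hn0 (p := 0) (q := 8) (by norm_num) (by norm_num)] at h08
      exact h08 ⟨k, by omega, by omega, by simpa [hg, SatP] using hgk⟩
  obtain ⟨hd13, hnd12, hnd23⟩ := hphi2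
  rw [DiaD_nat hn0 (p := 1) (q := 3) (by norm_num) (by norm_num)] at hd13
  obtain ⟨c, hc1, hc3, hphi1⟩ := hd13
  have hc2 : c = 2*n := by
    by_contra hne
    rcases Nat.lt_or_ge c (2*n) with h | h
    · exact hnd12 ((DiaD_nat hn0 (p := 1) (q := 2) (by norm_num) (by norm_num) _ _).mpr
        ⟨c, by omega, by omega, hphi1⟩)
    · exact hnd23 ((DiaD_nat hn0 (p := 2) (q := 3) (by norm_num) (by norm_num) _ _).mpr
        ⟨c, by omega, by omega, hphi1⟩)
  subst hc2
  refine core n hn g a (by omega) (by omega) hZ ?_ ?_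
  · intro s hs1 hs3 hsne hP
    have h' : Phi1D f n (((a+s:ℕ):ℝ≥0)/n) := (Phi1D_nat hn0 f _).mpr hP
    rcases Nat.lt_or_ge s (2*n) with h | h
    · exact hnd12 ((DiaD_nat hn0 (p := 1) (q := 2) (by norm_num) (by norm_num) _ _).mpr
        ⟨s, by omega, by omega, h'⟩)
    · exact hnd23 ((DiaD_nat hn0 (p := 2) (q := 3) (by norm_num) (by norm_num) _ _).mpr
        ⟨s, by omega, by omega, h'⟩)
  · exact (Phi1D_nat hn0 f _).mp hphi1

private lemma tau_le {f : ℝ≥0 → ℝ} {t : ℝ≥0} (h : 1 ≤ f t) : tauInf f ≤ t := sInf_le ⟨t, rfl, h⟩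

private lemma not_hit {f : ℝ≥0 → ℝ} {t : ℝ≥0} (h : (t:ℝ≥0∞) < tauInf f) : ¬ (1 ≤ f t) :=
  fun hh => absurd (tau_le hh) (not_le.mpr h)

private lemma helper0 {r : ℝ≥0} (h8 : 8 < r) (h9 : r < 9) :
    ∃ t : ℝ≥0, 1 < t ∧ t < 2 ∧ t + 7 = r := by
  refine ⟨((r:ℝ) - 7).toNNReal, ?_, ?_, ?_⟩
  · rw [← NNReal.coe_lt_coe,
      Real.coe_toNNReal _ (by push_cast [← NNReal.coe_lt_coe] at h8 ⊢; linarith)]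
    push_cast [← NNReal.coe_lt_coe] at h8 ⊢; linarith
  · rw [← NNReal.coe_lt_coe,
      Real.coe_toNNReal _ (by push_cast [← NNReal.coe_lt_coe] at h8 ⊢; linarith)]
    push_cast [← NNReal.coe_lt_coe] at h9 ⊢; linarith
  · rw [← NNReal.coe_inj]
    push_cast [Real.coe_toNNReal _
      (show (0:ℝ) ≤ (r:ℝ) - 7 by push_cast [← NNReal.coe_lt_coe] at h8; linarith)]
    linarith

private lemma helper5 {u : ℝ≥0} (h1 : 1 < u) (h2 : u < 2) :
    ∃ v : ℝ≥0, 1 < v ∧ v < 4 ∧ u + v = 5 := by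
  have h1' : (1:ℝ) < u := by exact_mod_cast h1
  have h2' : (u:ℝ) < 2 := by exact_mod_cast h2
  have hnn : (0:ℝ) ≤ 5 - u := by linarith
  refine ⟨(5 - (u:ℝ)).toNNReal, ?_, ?_, ?_⟩
  · rw [← NNReal.coe_lt_coe, Real.coe_toNNReal _ hnn]; push_cast; linarith
  · rw [← NNReal.coe_lt_coe, Real.coe_toNNReal _ hnn]; push_cast; linarith
  · rw [← NNReal.coe_inj]; push_cast [Real.coe_toNNReal _ hnn]; linarith

private lemma helper1 {s : ℝ≥0} (h1 : 1 < s) (h2 : s < 2) :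
    ∃ u : ℝ≥0, 1 < u ∧ u < 2 ∧ s + u < 3 := by
  have h1' : (1:ℝ) < s := by exact_mod_cast h1
  have h2' : (s:ℝ) < 2 := by exact_mod_cast h2
  have hnn : (0:ℝ) ≤ (4 - s)/2 := by linarith
  refine ⟨((4 - (s:ℝ))/2).toNNReal, ?_, ?_, ?_⟩
  · rw [← NNReal.coe_lt_coe, Real.coe_toNNReal _ hnn]; push_cast; linarith
  · rw [← NNReal.coe_lt_coe, Real.coe_toNNReal _ hnn]; push_cast; linarith
  · rw [← NNReal.coe_lt_coe]; push_cast [Real.coe_toNNReal _ hnn]; linarith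

private lemma helper2 {s : ℝ≥0} (h2 : 2 < s) (h3 : s < 3) :
    ∃ u v : ℝ≥0, 1 < u ∧ u < 2 ∧ 1 < v ∧ v < 3 ∧ s + u + v = 7 := by
  have h2' : (2:ℝ) < s := by exact_mod_cast h2
  have h3' : (s:ℝ) < 3 := by exact_mod_cast h3
  have hnnu : (0:ℝ) ≤ 3 - s/2 := by linarith
  have hnnv : (0:ℝ) ≤ 4 - s/2 := by linarith
  refine ⟨(3 - (s:ℝ)/2).toNNReal, (4 - (s:ℝ)/2).toNNReal, ?_, ?_, ?_, ?_, ?_⟩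
  · rw [← NNReal.coe_lt_coe, Real.coe_toNNReal _ hnnu]; push_cast; linarith
  · rw [← NNReal.coe_lt_coe, Real.coe_toNNReal _ hnnu]; push_cast; linarith
  · rw [← NNReal.coe_lt_coe, Real.coe_toNNReal _ hnnv]; push_cast; linarith
  · rw [← NNReal.coe_lt_coe, Real.coe_toNNReal _ hnnv]; push_cast; linarith
  · rw [← NNReal.coe_inj]
    push_cast [Real.coe_toNNReal _ hnnu, Real.coe_toNNReal _ hnnv]; linarith

private lemma tau_mem_of_psi {f : ℝ≥0 → ℝ} (h : Psi f 0) (h8 : tauInf f ≠ 8) :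
    tauInf f ∈ Set.Ioo (8:ℝ≥0∞) 9 := by
  obtain ⟨h0, h08, hphi3⟩ := h
  have hge : (8:ℝ≥0∞) ≤ tauInf f := by
    refine le_sInf ?_
    rintro x ⟨u, rfl, hu⟩
    have hu8 : (8:ℝ≥0) ≤ u := by
      by_contra hlt
      push_neg at hlt
      rcases eq_or_lt_of_le (show (0:ℝ≥0) ≤ u from zero_le) with hz | hpos
      · exact h0 (by simpa [SatP, ← hz] using hu)
      · exact h08 ⟨u, ⟨hpos, hlt⟩, by simpa [SatP] using hu⟩
    exact_mod_cast hu8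
  obtain ⟨t, ⟨ht1, ht2⟩, hphi2⟩ := hphi3
  rw [zero_add] at hphi2
  obtain ⟨hd13, hnd12, hnd23⟩ := hphi2
  obtain ⟨s, ⟨hs1, hs3⟩, hphi1⟩ := hd13
  have hs2 : s = 2 := by
    refine le_antisymm ?_ ?_
    · by_contra hgt; push_neg at hgt; exact hnd23 ⟨s, ⟨hgt, hs3⟩, hphi1⟩
    · by_contra hgt; push_neg at hgt; exact hnd12 ⟨s, ⟨hs1, hgt⟩, hphi1⟩
  subst hs2
  have hle : tauInf f ≤ ((t + 7 : ℝ≥0) : ℝ≥0∞) := by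
    refine ENNReal.le_of_forall_pos_le_add ?_
    intro ε hε _
    have hm : 0 < min ε 1 := lt_min hε one_pos
    set u : ℝ≥0 := 1 + (min ε 1)/2 with hu
    have hu1 : 1 < u := by
      rw [hu, lt_add_iff_pos_right]
      exact div_pos hm two_pos
    have hu2 : u < 2 := by
      have h' : (min ε 1)/2 < 1 :=
        (div_lt_one two_pos).mpr (lt_of_le_of_lt (min_le_right _ _) one_lt_two)
      calc u = 1 + (min ε 1)/2 := hu
      _ < 1 + 1 := by exact add_lt_add_right h' 1
      _ = 2 := by norm_num
    obtain ⟨⟨v, ⟨hv1, hv4⟩, hhit⟩, -⟩ := hphi1 u ⟨hu1, hu2⟩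
    have h1 : tauInf f ≤ ((t + 2 + u + v : ℝ≥0) : ℝ≥0∞) := tau_le hhit
    refine h1.trans ?_
    have h2 : (t + 2 + u + v : ℝ≥0) ≤ t + 7 + ε := by
      have hv : v ≤ 4 := le_of_lt hv4
      have hu' : u ≤ 1 + ε := by
        rw [hu]
        have : (min ε 1)/2 ≤ ε := le_trans (div_le_self zero_le one_le_two) (min_le_left _ _)
        exact add_le_add_right this 1
      calc t + 2 + u + v ≤ t + 2 + (1 + ε) + 4 := by gcongr
      _ = t + 7 + ε := by ring
    calc ((t + 2 + u + v : ℝ≥0) : ℝ≥0∞) ≤ ((t + 7 + ε : ℝ≥0) : ℝ≥0∞) := by exact_mod_cast h2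
    _ = ((t + 7 : ℝ≥0) : ℝ≥0∞) + ε := by push_cast; ring
  constructor
  · exact lt_of_le_of_ne hge (Ne.symm h8)
  · refine lt_of_le_of_lt hle ?_
    have : (t + 7 : ℝ≥0) < 9 := by
      rw [show (9:ℝ≥0) = 2 + 7 by norm_num]
      exact add_lt_add_left ht2 7
    exact_mod_cast this

private lemma hit_at_tau {f : ℝ≥0 → ℝ} (hc : Continuous f) {r : ℝ≥0}
    (hr : tauInf f = (r:ℝ≥0∞)) : 1 ≤ f r := by
  by_contra hlt
  push_neg at hlt
  have hU : IsOpen (f ⁻¹' Set.Iio 1) := isOpen_Iio.preimage hc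
  rcases Metric.isOpen_iff.mp hU r hlt with ⟨ε, hε, hball⟩
  set ε' : ℝ≥0 := ε.toNNReal with hε'def
  have hε' : 0 < ε' := Real.toNNReal_pos.mpr hε
  have hbig : ((r + ε' : ℝ≥0) : ℝ≥0∞) ≤ tauInf f := by
    refine le_sInf ?_
    rintro x ⟨u, rfl, hu⟩
    have hru : r ≤ u := by
      have h := tau_le hu; rw [hr] at h; exact_mod_cast h
    have hdist : ¬ dist u r < ε := by
      intro hd
      exact absurd (hball hd) (not_lt.mpr hu)
    push_neg at hdist
    rw [NNReal.dist_eq] at hdist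
    have habs : |(u:ℝ) - r| = (u:ℝ) - r :=
      abs_of_nonneg (sub_nonneg.mpr (NNReal.coe_le_coe.mpr hru))
    rw [habs] at hdist
    have hfin : r + ε' ≤ u := by
      rw [← NNReal.coe_le_coe]
      push_cast [Real.coe_toNNReal _ hε.le]
      have hεε : (ε':ℝ) = ε := by rw [hε'def, Real.coe_toNNReal _ hε.le]
      linarith
    exact_mod_cast hfin
  rw [hr] at hbig
  have hco : r + ε' ≤ r := ENNReal.coe_le_coe.mp hbig
  exact absurd hco (not_le.mpr (lt_add_of_pos_right r hε'))

private lemma psi_of_tau {f : ℝ≥0 → ℝ} (hc : Continuous f) (hf0 : f 0 = 0)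
    (hτ : tauInf f ∈ Set.Ioo (8:ℝ≥0∞) 9) : Psi f 0 := by
  obtain ⟨h8, h9⟩ := hτ
  have hne : tauInf f ≠ ⊤ := ne_top_of_lt h9
  set r := (tauInf f).toNNReal with hrdef
  have hr : tauInf f = (r:ℝ≥0∞) := (ENNReal.coe_toNNReal hne).symm
  have hr8 : (8:ℝ≥0) < r := by rw [hr] at h8; exact_mod_cast h8
  have hr9 : r < 9 := by rw [hr] at h9; exact_mod_cast h9
  have hhit : 1 ≤ f r := hit_at_tau hc hr
  have hbelow : ∀ x : ℝ≥0, x < r → ¬ (1 ≤ f x) := by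
    intro x hx
    apply not_hit
    rw [hr]; exact_mod_cast hx
  obtain ⟨t, ht1, ht2, hteq⟩ := helper0 hr8 hr9
  refine ⟨?_, ?_, ?_⟩
  · simp [SatP, hf0]
  · rintro ⟨s, ⟨hs0, hs8⟩, hs⟩
    rw [zero_add] at hs
    exact hbelow s (lt_trans hs8 hr8) hs
  · refine ⟨t, ⟨ht1, ht2⟩, ?_⟩
    rw [zero_add]
    have hphi1 : Phi1 f (t + 2) := by
      rintro u ⟨hu1, hu2⟩
      obtain ⟨v, hv1, hv4, hveq⟩ := helper5 hu1 hu2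
      refine ⟨⟨v, ⟨hv1, hv4⟩, ?_⟩, ?_⟩
      · have he : t + 2 + u + v = r := by
          rw [← hteq]
          have hx : t + 2 + u + v = t + 2 + (u + v) := by ring
          rw [hx, hveq]; ring
        show SatP f (t + 2 + u + v)
        unfold SatP; rw [he]; exact hhit
      · rintro ⟨w, ⟨hw1, hw3⟩, hw⟩
        refine hbelow (t + 2 + u + w) ?_ hw
        rw [← hteq]
        have hsum : u + w < 5 := by
          calc u + w < 2 + 3 := add_lt_add hu2 hw3
          _ = 5 := by norm_num
        calc t + 2 + u + w = (t + 2) + (u + w) := by ring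
        _ < (t + 2) + 5 := add_lt_add_right hsum _
        _ = t + 7 := by ring
    refine ⟨⟨2, ⟨by norm_num, by norm_num⟩, hphi1⟩, ?_, ?_⟩
    · rintro ⟨s, ⟨hs1, hs2⟩, hp⟩
      obtain ⟨u, hu1, hu2, hsu⟩ := helper1 hs1 hs2
      obtain ⟨⟨v, ⟨hv1, hv4⟩, hhitv⟩, -⟩ := hp u ⟨hu1, hu2⟩
      refine hbelow (t + s + u + v) ?_ hhitv
      rw [← hteq]
      have hsum : s + u + v < 7 := by
        calc s + u + v < 3 + 4 := add_lt_add hsu hv4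
        _ = 7 := by norm_num
      calc t + s + u + v = t + (s + u + v) := by ring
      _ < t + 7 := add_lt_add_right hsum _
    · rintro ⟨s, ⟨hs2, hs3⟩, hp⟩
      obtain ⟨u, v, hu1, hu2, hv1, hv3, heq⟩ := helper2 hs2 hs3
      obtain ⟨-, hnd⟩ := hp u ⟨hu1, hu2⟩
      refine hnd ⟨v, ⟨hv1, hv3⟩, ?_⟩
      have he : t + s + u + v = r := by
        rw [← hteq]
        have hx : t + s + u + v = t + (s + u + v) := by ring
        rw [hx, heq]
      show SatP f (t + s + u + v)
      unfold SatP; rw [he]; exact hhit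

/-- the probability of the discretized semantics of `ψ` at time `0`
(which vanishes for all `n ≥ 2`, the corresponding event being empty) does not converge to
the probability of the continuous semantics of `ψ` at time `0`, which agrees up to a null set
with the positive-probability event `{τ ∈ (8,9)}`. -/
theorem stmt_9 {Ω : Type*} [MeasurableSpace Ω] (P : Measure Ω) [IsProbabilityMeasure P]
    (X : ℝ≥0 → Ω → ℝ) (N : Set Ω) (hNmeas : MeasurableSet N) (hPN : P N = 0)
    (hpath : ∀ ω ∉ N, Continuous (fun t => X t ω) ∧ X 0 ω = 0)
    (hτmeas : Measurable fun ω => tauInf fun t => X t ω)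
    (hτ8 : P {ω | tauInf (fun t => X t ω) = 8} = 0)
    (hτ89 : 0 < P {ω | tauInf (fun t => X t ω) ∈ Set.Ioo (8 : ℝ≥0∞) 9}) :
    (∀ n : ℕ, 2 ≤ n → {ω | PsiD (fun t => X t ω) n 0} = (∅ : Set Ω)) ∧
      (∀ n : ℕ, 2 ≤ n → P {ω | PsiD (fun t => X t ω) n 0} = 0) ∧
      (∃ N' : Set Ω, MeasurableSet N' ∧ P N' = 0 ∧
        ({ω | Psi (fun t => X t ω) 0} ∆
          {ω | tauInf (fun t => X t ω) ∈ Set.Ioo (8 : ℝ≥0∞) 9}) ⊆ N') ∧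
      ¬ Tendsto (fun n : ℕ => P {ω | PsiD (fun t => X t ω) n 0}) atTop
        (𝓝 (P {ω | tauInf (fun t => X t ω) ∈ Set.Ioo (8 : ℝ≥0∞) 9})) := by
  have hempty : ∀ n : ℕ, 2 ≤ n → {ω | PsiD (fun t => X t ω) n 0} = (∅ : Set Ω) := by
    intro n hn
    ext ω
    simp only [Set.mem_setOf_eq, Set.mem_empty_iff_false, iff_false]
    exact psiD_empty _ n hn
  have hzero : ∀ n : ℕ, 2 ≤ n → P {ω | PsiD (fun t => X t ω) n 0} = 0 := by
    intro n hn; rw [hempty n hn]; exact measure_empty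
  refine ⟨hempty, hzero, ?_, ?_⟩
  · refine ⟨N ∪ {ω | tauInf (fun t => X t ω) = 8}, hNmeas.union ?_, ?_, ?_⟩
    · exact hτmeas (measurableSet_singleton 8)
    · refine le_antisymm ?_ zero_le
      calc P (N ∪ {ω | tauInf (fun t => X t ω) = 8})
          ≤ P N + P {ω | tauInf (fun t => X t ω) = 8} := measure_union_le _ _
      _ = 0 := by rw [hPN, hτ8]; simp
    · intro ω hω
      rw [Set.mem_symmDiff] at hω
      by_contra hω'
      simp only [Set.mem_union, Set.mem_setOf_eq, not_or] at hω'
      obtain ⟨hωN, hω8⟩ := hω'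
      obtain ⟨hcont, hzero0⟩ := hpath ω hωN
      rcases hω with ⟨hpsi, hnot⟩ | ⟨hmem, hnpsi⟩
      · exact hnot (tau_mem_of_psi hpsi hω8)
      · exact hnpsi (psi_of_tau hcont hzero0 hmem)
  · intro h
    have heq : (fun n : ℕ => P {ω | PsiD (fun t => X t ω) n 0}) =ᶠ[atTop]
        (fun _ => (0:ℝ≥0∞)) :=
      Filter.eventually_atTop.mpr ⟨2, fun n hn => hzero n hn⟩
    have h0 : Tendsto (fun _ : ℕ => (0:ℝ≥0∞)) atTop
        (𝓝 (P {ω | tauInf (fun t => X t ω) ∈ Set.Ioo (8:ℝ≥0∞) 9})) := h.congr' heq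
    have hu := tendsto_nhds_unique h0 tendsto_const_nhds
    rw [hu] at hτ89
    exact lt_irrefl _ hτ89
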